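/- For all natural numbers n ≥ 0, the factor complexity of the Thue–Morse sequence satisfies f_t(16n) = f_t(8n) − f_t(8n+1) + 3·f_t(8n+2) − f_t(8n+4) (as an identity of integers). -/
import Mathlib


/-- The Thue–Morse sequence: `tm n` is the parity of the number of 1s in the
binary representation of `n`. -/
def tm (n : ℕ) : ℕ := (Nat.digits 2 n).sum % 2

/-- The factor complexity of the Thue–Morse sequence: the number of distinct
blocks of length `n` occurring in it. -/
noncomputable def tmComplexity (n : ℕ) : ℕ :=
  Set.ncard {w : Fin n → ℕ | ∃ i : ℕ, ∀ j : Fin n, w j = tm (i + j)}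

namespace TMaux

lemma tm_lt_two (n : ℕ) : tm n < 2 := Nat.mod_lt _ (by norm_num)

lemma tm_two_mul (n : ℕ) : tm (2 * n) = tm n := by
  rcases Nat.eq_zero_or_pos n with h | h
  · simp [h]
  · unfold tm
    rw [Nat.digits_def' (by norm_num) (by omega)]
    simp [Nat.mul_div_cancel_left _ (by norm_num : 0 < 2), Nat.mul_mod_right]

lemma tm_two_mul_add_one (n : ℕ) : tm (2 * n + 1) = 1 - tm n := by
  unfold tm
  rw [Nat.digits_def' (by norm_num) (by omega)]
  have h1 : (2 * n + 1) / 2 = n := by omega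
  have h2 : (2 * n + 1) % 2 = 1 := by omega
  rw [h1, h2]
  have := tm_lt_two n
  simp only [List.sum_cons]
  unfold tm at this
  omega

lemma tm_succ_of_even (k : ℕ) : tm (2 * k + 1) ≠ tm (2 * k) := by
  rw [tm_two_mul, tm_two_mul_add_one]
  have := tm_lt_two k
  omega

/-- no three consecutive equal letters in Thue–Morse. -/
lemma no_three (i : ℕ) (h1 : tm i = tm (i + 1)) (h2 : tm (i + 1) = tm (i + 2)) : False := by
  rcases Nat.even_or_odd i with ⟨k, hk⟩ | ⟨k, hk⟩
  · refine tm_succ_of_even k ?_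
    have e1 : 2 * k + 1 = i + 1 := by omega
    have e2 : 2 * k = i := by omega
    rw [e1, e2, ← h1]
  · refine tm_succ_of_even (k + 1) ?_
    have e1 : 2 * (k + 1) + 1 = i + 2 := by omega
    have e2 : 2 * (k + 1) = i + 1 := by omega
    rw [e1, e2, ← h2]

def S (n : ℕ) : Set (Fin n → ℕ) := {w | ∃ i : ℕ, ∀ j : Fin n, w j = tm (i + j)}

lemma tmComplexity_eq (n : ℕ) : tmComplexity n = (S n).ncard := rfl

lemma mem_S_lt {n : ℕ} {w : Fin n → ℕ} (h : w ∈ S n) (j : Fin n) : w j < 2 := by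
  obtain ⟨i, hi⟩ := h
  rw [hi j]; exact tm_lt_two _

lemma S_finite (n : ℕ) : (S n).Finite := by
  have h : (Set.univ.pi fun _ : Fin n => (Set.Iio 2 : Set ℕ)).Finite :=
    Set.Finite.pi fun _ => Set.finite_Iio 2
  refine h.subset fun w hw => ?_
  rw [Set.mem_pi]
  exact fun j _ => mem_S_lt hw j

/-! maps -/

def evn (m : ℕ) (u : Fin m → ℕ) : Fin (2 * m) → ℕ := fun j =>
  if j.val % 2 = 0 then u ⟨j.val / 2, by have := j.isLt; omega⟩
  else 1 - u ⟨j.val / 2, by have := j.isLt; omega⟩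

def odd (m : ℕ) (v : Fin (m + 1) → ℕ) : Fin (2 * m) → ℕ := fun j =>
  if j.val % 2 = 0 then 1 - v ⟨j.val / 2, by have := j.isLt; omega⟩
  else v ⟨j.val / 2 + 1, by have := j.isLt; omega⟩

def evn' (m : ℕ) (v : Fin (m + 1) → ℕ) : Fin (2 * m + 1) → ℕ := fun j =>
  if j.val % 2 = 0 then v ⟨j.val / 2, by have := j.isLt; omega⟩
  else 1 - v ⟨j.val / 2, by have := j.isLt; omega⟩

def odd' (m : ℕ) (v : Fin (m + 1) → ℕ) : Fin (2 * m + 1) → ℕ := fun j =>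
  if h : j.val % 2 = 0 then 1 - v ⟨j.val / 2, by have := j.isLt; omega⟩
  else v ⟨j.val / 2 + 1, by have := j.isLt; omega⟩

lemma evn_block (i m : ℕ) :
    evn m (fun q : Fin m => tm (i + q)) = fun j : Fin (2 * m) => tm (2 * i + j) := by
  funext j
  simp only [evn]
  by_cases h : j.val % 2 = 0
  · rw [if_pos h]
    have e : 2 * i + (j : ℕ) = 2 * (i + (j : ℕ) / 2) := by omega
    rw [e, tm_two_mul]
  · rw [if_neg h]
    have e : 2 * i + (j : ℕ) = 2 * (i + (j : ℕ) / 2) + 1 := by omega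
    rw [e, tm_two_mul_add_one]

lemma odd_block (i m : ℕ) :
    odd m (fun q : Fin (m + 1) => tm (i + q)) = fun j : Fin (2 * m) => tm (2 * i + 1 + j) := by
  funext j
  simp only [odd]
  by_cases h : j.val % 2 = 0
  · rw [if_pos h]
    have e : 2 * i + 1 + (j : ℕ) = 2 * (i + (j : ℕ) / 2) + 1 := by omega
    rw [e, tm_two_mul_add_one]
  · rw [if_neg h]
    have e : 2 * i + 1 + (j : ℕ) = 2 * (i + ((j : ℕ) / 2 + 1)) := by omega
    rw [e, tm_two_mul]

lemma evn'_block (i m : ℕ) :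
    evn' m (fun q : Fin (m + 1) => tm (i + q)) = fun j : Fin (2 * m + 1) => tm (2 * i + j) := by
  funext j
  simp only [evn']
  by_cases h : j.val % 2 = 0
  · rw [if_pos h]
    have e : 2 * i + (j : ℕ) = 2 * (i + (j : ℕ) / 2) := by omega
    rw [e, tm_two_mul]
  · rw [if_neg h]
    have e : 2 * i + (j : ℕ) = 2 * (i + (j : ℕ) / 2) + 1 := by omega
    rw [e, tm_two_mul_add_one]

lemma odd'_block (i m : ℕ) :
    odd' m (fun q : Fin (m + 1) => tm (i + q)) = fun j : Fin (2 * m + 1) => tm (2 * i + 1 + j) := by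
  funext j
  simp only [odd']
  by_cases h : j.val % 2 = 0
  · rw [dif_pos h]
    have e : 2 * i + 1 + (j : ℕ) = 2 * (i + (j : ℕ) / 2) + 1 := by omega
    rw [e, tm_two_mul_add_one]
  · rw [dif_neg h]
    have e : 2 * i + 1 + (j : ℕ) = 2 * (i + ((j : ℕ) / 2 + 1)) := by omega
    rw [e, tm_two_mul]

lemma block_mem_S (i n : ℕ) : (fun q : Fin n => tm (i + q)) ∈ S n := ⟨i, fun _ => rfl⟩

lemma S_eq_even (m : ℕ) : S (2 * m) = evn m '' S m ∪ odd m '' S (m + 1) := by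
  ext w
  constructor
  · rintro ⟨i, hi⟩
    have hw : w = fun j : Fin (2 * m) => tm (i + j) := funext hi
    rcases Nat.even_or_odd i with ⟨k, hk⟩ | ⟨k, hk⟩
    · left
      refine ⟨_, block_mem_S k m, ?_⟩
      rw [evn_block, hw]
      simp only [hk]
      funext j; congr 1; omega
    · right
      refine ⟨_, block_mem_S k (m + 1), ?_⟩
      rw [odd_block, hw]
      simp only [hk]
    
  · rintro (⟨u, ⟨i, hi⟩, rfl⟩ | ⟨v, ⟨i, hi⟩, rfl⟩)
    · have : u = fun q : Fin m => tm (i + q) := funext hi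
      rw [this, evn_block]
      exact block_mem_S _ _
    · have : v = fun q : Fin (m + 1) => tm (i + q) := funext hi
      rw [this, odd_block]
      exact block_mem_S _ _

lemma S_eq_odd (m : ℕ) : S (2 * m + 1) = evn' m '' S (m + 1) ∪ odd' m '' S (m + 1) := by
  ext w
  constructor
  · rintro ⟨i, hi⟩
    have hw : w = fun j : Fin (2 * m + 1) => tm (i + j) := funext hi
    rcases Nat.even_or_odd i with ⟨k, hk⟩ | ⟨k, hk⟩
    · left
      refine ⟨_, block_mem_S k (m + 1), ?_⟩
      rw [evn'_block, hw]
      simp only [hk]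
      funext j; congr 1; omega
    · right
      refine ⟨_, block_mem_S k (m + 1), ?_⟩
      rw [odd'_block, hw]
      simp only [hk]
  · rintro (⟨v, ⟨i, hi⟩, rfl⟩ | ⟨v, ⟨i, hi⟩, rfl⟩)
    · have : v = fun q : Fin (m + 1) => tm (i + q) := funext hi
      rw [this, evn'_block]
      exact block_mem_S _ _
    · have : v = fun q : Fin (m + 1) => tm (i + q) := funext hi
      rw [this, odd'_block]
      exact block_mem_S _ _


lemma evn_apply_even' (m : ℕ) (u : Fin m → ℕ) (q : Fin m) :
    evn m u ⟨2 * q.val, by have := q.isLt; omega⟩ = u q := by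
  simp only [evn]
  rw [if_pos (by omega)]
  congr 1
  first
  | omega
  | (ext; simp only [Fin.coe_castSucc, Fin.val_succ]; omega)
  | (congr 1 <;> first
      | rfl
      | omega
      | (ext; simp only [Fin.coe_castSucc, Fin.val_succ]; omega))

lemma evn_apply_odd' (m : ℕ) (u : Fin m → ℕ) (q : Fin m) :
    evn m u ⟨2 * q.val + 1, by have := q.isLt; omega⟩ = 1 - u q := by
  simp only [evn]
  rw [if_neg (by omega)]
  congr 1
  first
  | omega
  | (ext; simp only [Fin.coe_castSucc, Fin.val_succ]; omega)
  | (congr 1 <;> first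
      | rfl
      | omega
      | (ext; simp only [Fin.coe_castSucc, Fin.val_succ]; omega))

lemma odd_apply_even' (m : ℕ) (v : Fin (m + 1) → ℕ) (q : Fin m) :
    odd m v ⟨2 * q.val, by have := q.isLt; omega⟩ = 1 - v q.castSucc := by
  simp only [odd]
  rw [if_pos (by omega)]
  congr 1
  first
  | omega
  | (ext; simp only [Fin.coe_castSucc, Fin.val_succ]; omega)
  | (congr 1 <;> first
      | rfl
      | omega
      | (ext; simp only [Fin.coe_castSucc, Fin.val_succ]; omega))

lemma odd_apply_odd' (m : ℕ) (v : Fin (m + 1) → ℕ) (q : Fin m) :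
    odd m v ⟨2 * q.val + 1, by have := q.isLt; omega⟩ = v q.succ := by
  simp only [odd]
  rw [if_neg (by omega)]
  congr 1
  first
  | omega
  | (ext; simp only [Fin.coe_castSucc, Fin.val_succ]; omega)
  | (congr 1 <;> first
      | rfl
      | omega
      | (ext; simp only [Fin.coe_castSucc, Fin.val_succ]; omega))

lemma evn'_apply_even' (m : ℕ) (v : Fin (m + 1) → ℕ) (q : Fin (m + 1)) :
    evn' m v ⟨2 * q.val, by have := q.isLt; omega⟩ = v q := by
  simp only [evn']
  rw [if_pos (by omega)]
  congr 1
  first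
  | omega
  | (ext; simp only [Fin.coe_castSucc, Fin.val_succ]; omega)
  | (congr 1 <;> first
      | rfl
      | omega
      | (ext; simp only [Fin.coe_castSucc, Fin.val_succ]; omega))

lemma evn'_apply_odd' (m : ℕ) (v : Fin (m + 1) → ℕ) (q : Fin m) :
    evn' m v ⟨2 * q.val + 1, by have := q.isLt; omega⟩ = 1 - v q.castSucc := by
  simp only [evn']
  rw [if_neg (by omega)]
  congr 1
  first
  | omega
  | (ext; simp only [Fin.coe_castSucc, Fin.val_succ]; omega)
  | (congr 1 <;> first
      | rfl
      | omega
      | (ext; simp only [Fin.coe_castSucc, Fin.val_succ]; omega))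

lemma odd'_apply_even' (m : ℕ) (v : Fin (m + 1) → ℕ) (q : Fin (m + 1)) :
    odd' m v ⟨2 * q.val, by have := q.isLt; omega⟩ = 1 - v q := by
  simp only [odd']
  rw [dif_pos (by omega)]
  congr 1
  first
  | omega
  | (ext; simp only [Fin.coe_castSucc, Fin.val_succ]; omega)
  | (congr 1 <;> first
      | rfl
      | omega
      | (ext; simp only [Fin.coe_castSucc, Fin.val_succ]; omega))

lemma odd'_apply_odd' (m : ℕ) (v : Fin (m + 1) → ℕ) (q : Fin m) :
    odd' m v ⟨2 * q.val + 1, by have := q.isLt; omega⟩ = v q.succ := by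
  simp only [odd']
  rw [dif_neg (by omega)]
  congr 1
  first
  | omega
  | (ext; simp only [Fin.coe_castSucc, Fin.val_succ]; omega)
  | (congr 1 <;> first
      | rfl
      | omega
      | (ext; simp only [Fin.coe_castSucc, Fin.val_succ]; omega))

lemma evn_injOn (m : ℕ) : Set.InjOn (evn m) (S m) := by
  intro u1 _ u2 _ h
  funext q
  have e := congrFun h ⟨2 * q.val, by have := q.isLt; omega⟩
  rwa [evn_apply_even' m u1 q, evn_apply_even' m u2 q] at e

lemma odd_injOn (m : ℕ) (hm : 1 ≤ m) : Set.InjOn (odd m) (S (m + 1)) := by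
  intro v1 h1 v2 h2 h
  funext p
  by_cases hp : p.val < m
  · set q : Fin m := ⟨p.val, hp⟩ with hq
    have hcs : q.castSucc = p := by ext; simp [hq]
    have e := congrFun h ⟨2 * q.val, by have := q.isLt; omega⟩
    rw [odd_apply_even' m v1 q, odd_apply_even' m v2 q, hcs] at e
    have b1 := mem_S_lt h1 p
    have b2 := mem_S_lt h2 p
    omega
  · set q : Fin m := ⟨m - 1, by omega⟩ with hq
    have hcs : q.succ = p := by
      ext
      simp only [Fin.val_succ, hq]
      have := p.isLt
      omega
    have e := congrFun h ⟨2 * q.val + 1, by have := q.isLt; omega⟩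
    rw [odd_apply_odd' m v1 q, odd_apply_odd' m v2 q, hcs] at e
    exact e

lemma evn'_injOn (m : ℕ) : Set.InjOn (evn' m) (S (m + 1)) := by
  intro v1 _ v2 _ h
  funext q
  have e := congrFun h ⟨2 * q.val, by have := q.isLt; omega⟩
  rwa [evn'_apply_even' m v1 q, evn'_apply_even' m v2 q] at e

lemma odd'_injOn (m : ℕ) : Set.InjOn (odd' m) (S (m + 1)) := by
  intro v1 h1 v2 h2 h
  funext p
  have e := congrFun h ⟨2 * p.val, by have := p.isLt; omega⟩
  rw [odd'_apply_even' m v1 p, odd'_apply_even' m v2 p] at e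
  have b1 := mem_S_lt h1 p
  have b2 := mem_S_lt h2 p
  omega

lemma const_notMem (m : ℕ) (hm : 2 ≤ m) (v : Fin (m + 1) → ℕ) (hv : v ∈ S (m + 1))
    (hconst : ∀ q : Fin m, v q.succ = v q.castSucc) : False := by
  obtain ⟨i, hi⟩ := hv
  have c0 := hconst ⟨0, by omega⟩
  have c1 := hconst ⟨1, by omega⟩
  simp only [hi] at c0 c1
  simp only [Fin.val_succ, Fin.coe_castSucc] at c0 c1
  norm_num at c0 c1
  exact no_three i c0.symm c1.symm

lemma disj_even (m : ℕ) (hm : 2 ≤ m) : Disjoint (evn m '' S m) (odd m '' S (m + 1)) := by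
  rw [Set.disjoint_left]
  rintro w ⟨u, hu, rfl⟩ ⟨v, hv, he⟩
  refine const_notMem m hm v hv fun q => ?_
  have e1 := congrFun he ⟨2 * q.val, by have := q.isLt; omega⟩
  have e2 := congrFun he ⟨2 * q.val + 1, by have := q.isLt; omega⟩
  rw [odd_apply_even' m v q, evn_apply_even' m u q] at e1
  rw [odd_apply_odd' m v q, evn_apply_odd' m u q] at e2
  have b1 := mem_S_lt hu q
  have b2 := mem_S_lt hv q.castSucc
  omega

lemma disj_odd (m : ℕ) (hm : 2 ≤ m) : Disjoint (evn' m '' S (m + 1)) (odd' m '' S (m + 1)) := by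
  rw [Set.disjoint_left]
  rintro w ⟨u, hu, rfl⟩ ⟨v, hv, he⟩
  refine const_notMem m hm v hv fun q => ?_
  have e1 := congrFun he
    ⟨2 * (q.castSucc).val, by have := q.isLt; simp only [Fin.coe_castSucc]; omega⟩
  have e2 := congrFun he ⟨2 * q.val + 1, by have := q.isLt; omega⟩
  rw [odd'_apply_even' m v q.castSucc, evn'_apply_even' m u q.castSucc] at e1
  rw [odd'_apply_odd' m v q, evn'_apply_odd' m u q] at e2
  have b1 := mem_S_lt hu q.castSucc
  have b2 := mem_S_lt hv q.castSucc
  omega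

lemma rec_even (m : ℕ) (hm : 2 ≤ m) :
    (S (2 * m)).ncard = (S m).ncard + (S (m + 1)).ncard := by
  rw [S_eq_even m,
    Set.ncard_union_eq (disj_even m hm) ((S_finite m).image _) ((S_finite (m + 1)).image _),
    Set.ncard_image_of_injOn (evn_injOn m), Set.ncard_image_of_injOn (odd_injOn m (by omega))]

lemma rec_odd (m : ℕ) (hm : 2 ≤ m) :
    (S (2 * m + 1)).ncard = 2 * (S (m + 1)).ncard := by
  rw [S_eq_odd m,
    Set.ncard_union_eq (disj_odd m hm) ((S_finite (m + 1)).image _) ((S_finite (m + 1)).image _),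
    Set.ncard_image_of_injOn (evn'_injOn m), Set.ncard_image_of_injOn (odd'_injOn m)]
  ring

lemma card0 : (S 0).ncard = 1 := by
  have h : S 0 = Set.univ := by
    ext w
    simp only [Set.mem_univ, iff_true]
    exact ⟨0, fun j => j.elim0⟩
  rw [h, Set.ncard_univ, Nat.card_unique]

lemma card1 : (S 1).ncard = 2 := by
  have h : S 1 = {fun _ => 0, fun _ => 1} := by
    ext w
    constructor
    · rintro ⟨i, hi⟩
      have hw : ∀ j : Fin 1, w j = tm i := by
        intro j
        rw [hi j]
        congr 1
        have := j.isLt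
        omega
      have hlt := tm_lt_two i
      have : tm i = 0 ∨ tm i = 1 := by omega
      rcases this with h' | h'
      · left; funext j; rw [hw j, h']
      · right; funext j; rw [hw j, h']
    · rintro (rfl | rfl)
      · refine ⟨0, fun j => ?_⟩
        have hj : (j : ℕ) = 0 := by have := j.isLt; omega
        rw [hj]
        norm_num [tm]
      · refine ⟨1, fun j => ?_⟩
        have hj : (j : ℕ) = 0 := by have := j.isLt; omega
        rw [hj]
        norm_num [tm]
  rw [h]
  refine Set.ncard_pair ?_
  intro hcontra
  have := congrFun hcontra 0
  simp at this

lemma eq_vec2 {w : Fin 2 → ℕ} {a b : ℕ} (h0 : w 0 = a) (h1 : w 1 = b) : w = ![a, b] := by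
  funext j; fin_cases j
  · simpa using h0
  · simpa using h1

lemma eq_vec3 {w : Fin 3 → ℕ} {a b c : ℕ} (h0 : w 0 = a) (h1 : w 1 = b) (h2 : w 2 = c) :
    w = ![a, b, c] := by
  funext j; fin_cases j
  · simpa using h0
  · simpa using h1
  · simpa using h2

lemma card2 : (S 2).ncard = 4 := by
  have h : S 2 = ↑({![0,0], ![0,1], ![1,0], ![1,1]} : Finset (Fin 2 → ℕ)) := by
    ext w
    constructor
    · rintro ⟨i, hi⟩
      have h0 : w 0 = tm (i + 0) := by simpa using hi 0
      have h1 : w 1 = tm (i + 1) := by simpa using hi 1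
      have b0 := tm_lt_two (i + 0)
      have b1 := tm_lt_two (i + 1)
      have c0 : w 0 = 0 ∨ w 0 = 1 := by omega
      have c1 : w 1 = 0 ∨ w 1 = 1 := by omega
      rcases c0 with e0 | e0 <;> rcases c1 with e1 | e1 <;>
        rw [eq_vec2 e0 e1] <;> decide
    · intro hw
      simp only [Finset.coe_insert, Set.mem_insert_iff, Finset.coe_singleton,
        Set.mem_singleton_iff] at hw
      rcases hw with rfl | rfl | rfl | rfl
      · exact ⟨5, by intro j; fin_cases j <;> norm_num [tm]⟩
      · exact ⟨0, by intro j; fin_cases j <;> norm_num [tm]⟩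
      · exact ⟨2, by intro j; fin_cases j <;> norm_num [tm]⟩
      · exact ⟨1, by intro j; fin_cases j <;> norm_num [tm]⟩
  rw [h, Set.ncard_coe_finset]
  decide

lemma card3 : (S 3).ncard = 6 := by
  have h : S 3 = ↑({![0,0,1], ![0,1,0], ![0,1,1], ![1,0,0], ![1,0,1], ![1,1,0]} :
      Finset (Fin 3 → ℕ)) := by
    ext w
    constructor
    · rintro ⟨i, hi⟩
      have h0 : w 0 = tm (i + 0) := by simpa using hi 0
      have h1 : w 1 = tm (i + 1) := by simpa using hi 1
      have h2 : w 2 = tm (i + 2) := by simpa using hi 2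
      have hne : ¬(w 0 = w 1 ∧ w 1 = w 2) := by
        rw [h0, h1, h2]
        rintro ⟨a, b⟩
        exact no_three i (by simpa using a) b
      have b0 := tm_lt_two (i + 0)
      have b1 := tm_lt_two (i + 1)
      have b2 := tm_lt_two (i + 2)
      have c0 : w 0 = 0 ∨ w 0 = 1 := by omega
      have c1 : w 1 = 0 ∨ w 1 = 1 := by omega
      have c2 : w 2 = 0 ∨ w 2 = 1 := by omega
      rcases c0 with e0 | e0 <;> rcases c1 with e1 | e1 <;> rcases c2 with e2 | e2 <;>
        first
        | exact absurd ⟨by omega, by omega⟩ hne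
        | (rw [eq_vec3 e0 e1 e2]; decide)
    · intro hw
      simp only [Finset.coe_insert, Set.mem_insert_iff, Finset.coe_singleton,
        Set.mem_singleton_iff] at hw
      rcases hw with rfl | rfl | rfl | rfl | rfl | rfl
      · exact ⟨5, by intro j; fin_cases j <;> norm_num [tm]⟩
      · exact ⟨3, by intro j; fin_cases j <;> norm_num [tm]⟩
      · exact ⟨0, by intro j; fin_cases j <;> norm_num [tm]⟩
      · exact ⟨4, by intro j; fin_cases j <;> norm_num [tm]⟩
      · exact ⟨2, by intro j; fin_cases j <;> norm_num [tm]⟩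
      · exact ⟨1, by intro j; fin_cases j <;> norm_num [tm]⟩
  rw [h, Set.ncard_coe_finset]
  decide

end TMaux

open TMaux in
theorem stmt_16 (n : ℕ) :
    (tmComplexity (16 * n) : ℤ) =
      tmComplexity (8 * n) - tmComplexity (8 * n + 1)
        + 3 * tmComplexity (8 * n + 2) - tmComplexity (8 * n + 4) := by
  rcases Nat.eq_zero_or_pos n with rfl | hn
  · have h4 : (S 4).ncard = 10 := by
      have h := rec_even 2 (le_refl 2)
      rw [show (2 : ℕ) * 2 = 4 by norm_num, show (2 : ℕ) + 1 = 3 by norm_num,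
        card2, card3] at h
      omega
    simp only [Nat.mul_zero, Nat.zero_add, tmComplexity_eq, card0, card1, card2, h4]
    norm_num
  · have A := rec_even (8 * n) (by omega)
    rw [show 2 * (8 * n) = 16 * n by ring] at A
    have B := rec_odd (4 * n) (by omega)
    rw [show 2 * (4 * n) + 1 = 8 * n + 1 by ring, show 4 * n + 1 = 4 * n + 1 from rfl] at B
    have C := rec_even (4 * n) (by omega)
    rw [show 2 * (4 * n) = 8 * n by ring] at C
    have D := rec_even (4 * n + 1) (by omega)
    rw [show 2 * (4 * n + 1) = 8 * n + 2 by ring, show 4 * n + 1 + 1 = 4 * n + 2 by ring] at D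
    have E := rec_even (4 * n + 2) (by omega)
    rw [show 2 * (4 * n + 2) = 8 * n + 4 by ring, show 4 * n + 2 + 1 = 4 * n + 3 by ring] at E
    have F := rec_odd (2 * n) (by omega)
    rw [show 2 * (2 * n) + 1 = 4 * n + 1 by ring] at F
    have G := rec_odd (2 * n + 1) (by omega)
    rw [show 2 * (2 * n + 1) + 1 = 4 * n + 3 by ring, show 2 * n + 1 + 1 = 2 * n + 2 by ring] at G
    have H := rec_even (2 * n + 1) (by omega)
    rw [show 2 * (2 * n + 1) = 4 * n + 2 by ring, show 2 * n + 1 + 1 = 2 * n + 2 by ring] at H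
    simp only [tmComplexity_eq]
    omega
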